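/- For b ≥ 1 and a = b, the atomic density of M_{b,b} equals 1 − 1/b; that is, the limit as n → ∞ of |{atoms of M_{b,b}} ∩ {1,…,n}| / |M_{b,b} ∩ {1,…,n}| equals 1 − 1/b. -/

import Mathlib

open scoped Classical

/-- Membership in `M_{b,b}`. -/
def memMbb (b n : ℕ) : Prop := (1 ≤ n ∧ b ∣ n) ∨ n = 1

/-- `n` is an atom of `M_{b,b}`. -/
def atomMbb (b n : ℕ) : Prop :=
  memMbb b n ∧ 1 < n ∧ ¬ ∃ m m' : ℕ, memMbb b m ∧ memMbb b m' ∧ 1 < m ∧ 1 < m' ∧ n = m * m'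

open Filter Finset

section Aux

/-- Limit of floor-division ratio. -/
lemma natDiv_div_tendsto (b : ℕ) (hb : 1 ≤ b) :
    Tendsto (fun n : ℕ => ((n / b : ℕ) : ℝ) / (n : ℝ)) atTop (nhds (1 / (b : ℝ))) := by
  have hb0 : (0:ℝ) < b := by exact_mod_cast hb
  have h := (tendsto_nat_floor_mul_div_atTop (R := ℝ)
      (a := 1 / (b:ℝ)) (by positivity)).comp tendsto_natCast_atTop_atTop
  convert h using 2 with n
  simp only [Function.comp]
  congr 1
  rw [one_div, inv_mul_eq_div, Nat.floor_div_natCast, Nat.floor_natCast]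

lemma atomMbb_iff (b : ℕ) (hb : 2 ≤ b) (k : ℕ) :
    atomMbb b k ↔ (1 ≤ k ∧ b ∣ k ∧ ¬ (b * b) ∣ k) := by
  constructor
  · rintro ⟨hm, h1, hne⟩
    have hk1 : 1 ≤ k := le_of_lt h1
    have hdvd : b ∣ k := by
      rcases hm with ⟨_, h⟩ | h
      · exact h
      · omega
    refine ⟨hk1, hdvd, fun hsq => hne ?_⟩
    obtain ⟨t, ht⟩ := hsq
    have ht1 : 1 ≤ t := by
      rcases Nat.eq_zero_or_pos t with rfl | h0
      · rw [mul_zero] at ht; omega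
      · exact h0
    refine ⟨b, b * t, Or.inl ⟨by omega, dvd_rfl⟩, Or.inl ⟨by nlinarith, ⟨t, rfl⟩⟩,
      by omega, by nlinarith, by linarith [ht]⟩
  · rintro ⟨hk1, hdvd, hnsq⟩
    have hkb : b ≤ k := Nat.le_of_dvd (by omega) hdvd
    refine ⟨Or.inl ⟨hk1, hdvd⟩, by omega, ?_⟩
    rintro ⟨m, m', hmm, hmm', hm1, hm'1, rfl⟩
    have h1 : b ∣ m := by rcases hmm with ⟨_, h⟩ | h; exact h; omega
    have h2 : b ∣ m' := by rcases hmm' with ⟨_, h⟩ | h; exact h; omega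
    exact hnsq (mul_dvd_mul h1 h2)

lemma card_mem_filter (b : ℕ) (hb : 2 ≤ b) (n : ℕ) (hn : 1 ≤ n) :
    ((Finset.Icc 1 n).filter (fun k => memMbb b k)).card = n / b + 1 := by
  have : ((Finset.Icc 1 n).filter (fun k => memMbb b k))
      = insert 1 ((Finset.Icc 1 n).filter (fun k => b ∣ k)) := by
    ext k
    simp only [mem_filter, mem_insert, Finset.mem_Icc]
    simp only [memMbb]
    constructor
    · rintro ⟨⟨h1, h2⟩, ⟨_, h⟩ | h⟩
      · exact Or.inr ⟨⟨h1, h2⟩, h⟩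
      · exact Or.inl h
    · rintro (rfl | ⟨⟨h1, h2⟩, h⟩)
      · exact ⟨⟨le_refl 1, hn⟩, Or.inr rfl⟩
      · exact ⟨⟨h1, h2⟩, Or.inl ⟨h1, h⟩⟩
  rw [this, Finset.card_insert_of_notMem]
  · congr 1
    rw [show (1:ℕ) = 0 + 1 from rfl, Finset.Icc_add_one_left_eq_Ioc]
    exact Nat.Ioc_filter_dvd_card_eq_div n b
  · simp only [mem_filter]
    rintro ⟨-, h⟩
    have := Nat.le_of_dvd one_pos h
    omega

lemma card_atom_filter (b : ℕ) (hb : 2 ≤ b) (n : ℕ) :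
    ((Finset.Icc 1 n).filter (fun k => atomMbb b k)).card = n / b - n / (b * b) := by
  have heq : ((Finset.Icc 1 n).filter (fun k => atomMbb b k))
      = ((Finset.Icc 1 n).filter (fun k => b ∣ k)) \
        ((Finset.Icc 1 n).filter (fun k => (b * b) ∣ k)) := by
    ext k
    simp only [mem_filter, Finset.mem_sdiff, Finset.mem_Icc, atomMbb_iff b hb]
    tauto
  rw [heq, Finset.card_sdiff_of_subset]
  · rw [show (1:ℕ) = 0 + 1 from rfl, Finset.Icc_add_one_left_eq_Ioc,
      Nat.Ioc_filter_dvd_card_eq_div, Nat.Ioc_filter_dvd_card_eq_div]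
  · intro k
    simp only [mem_filter]
    exact fun ⟨h1, h2⟩ => ⟨h1, dvd_trans (Dvd.intro b rfl) h2⟩

lemma tendsto_ratio_ge_two (b : ℕ) (hb : 2 ≤ b) :
    Tendsto (fun n : ℕ =>
      (((n / b - n / (b*b) : ℕ):ℝ)) / (((n / b + 1 : ℕ):ℝ)))
      atTop (nhds (1 - 1 / (b:ℝ))) := by
  have hb0 : (0:ℝ) < b := by positivity
  have hb1 : 1 ≤ b := by omega
  have h1 := natDiv_div_tendsto b hb1
  have h2 := natDiv_div_tendsto (b*b) (by nlinarith)
  have hnum : Tendsto (fun n : ℕ => ((n / b - n / (b*b) : ℕ):ℝ) / (n:ℝ)) atTop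
      (nhds (1/(b:ℝ) - 1/((b:ℝ)*(b:ℝ)))) := by
    have := h1.sub h2
    rw [show ((b*b : ℕ):ℝ) = (b:ℝ)*(b:ℝ) by push_cast; ring] at this
    apply this.congr
    intro n
    rw [Nat.cast_sub (Nat.div_le_div_left (Nat.le_mul_of_pos_left b (by omega)) (by omega)),
      sub_div]
  have hden : Tendsto (fun n : ℕ => ((n / b + 1 : ℕ):ℝ) / (n:ℝ)) atTop
      (nhds (1/(b:ℝ) + 0)) := by
    have := h1.add tendsto_one_div_atTop_nhds_zero_nat
    apply this.congr
    intro n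
    push_cast
    rw [add_div]
  have hkey := hnum.div hden (by rw [add_zero]; positivity)
  have heq : (1/(b:ℝ) - 1/((b:ℝ)*(b:ℝ))) / (1/(b:ℝ) + 0) = 1 - 1/(b:ℝ) := by
    rw [add_zero]; field_simp
  rw [heq] at hkey
  apply hkey.congr'
  filter_upwards [eventually_ge_atTop 1] with n hn
  have hn0 : (n:ℝ) ≠ 0 := by positivity
  show (_ / (n:ℝ)) / (_ / (n:ℝ)) = _
  rw [div_div_div_cancel_right₀]
  exact hn0

lemma sum_primesBelow_tendsto :
    Tendsto (fun k : ℕ => ∑ p ∈ Nat.primesBelow k, (1 / (p:ℝ))) atTop atTop := by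
  have hnn : ∀ n : ℕ, 0 ≤ Set.indicator {p : ℕ | p.Prime} (fun n : ℕ => (1:ℝ)/n) n :=
    fun n => Set.indicator_nonneg (fun p _ => by positivity) n
  have h := (not_summable_iff_tendsto_nat_atTop_of_nonneg hnn).mp
    not_summable_one_div_on_primes
  apply h.congr
  intro k
  rw [Nat.primesBelow, Finset.sum_filter]
  exact Finset.sum_congr rfl fun i _ => by
    rw [Set.indicator_apply]
    simp [Set.mem_setOf_eq]

lemma prod_primesBelow_tendsto :
    Tendsto (fun k : ℕ => ∏ p ∈ Nat.primesBelow k, (1 - 1 / (p:ℝ))) atTop (nhds 0) := by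
  have hfac : ∀ k : ℕ, ∀ p ∈ Nat.primesBelow k, (0:ℝ) ≤ 1 - 1/(p:ℝ) := by
    intro k p hp
    have h2 : 2 ≤ p := (Nat.prime_of_mem_primesBelow hp).two_le
    have : (1:ℝ)/(p:ℝ) ≤ 1 := by
      rw [div_le_one (by positivity)]
      exact_mod_cast le_trans one_le_two h2
    linarith
  have hup : ∀ k : ℕ, ∏ p ∈ Nat.primesBelow k, (1 - 1/(p:ℝ)) ≤
      Real.exp (-(∑ p ∈ Nat.primesBelow k, (1/(p:ℝ)))) := by
    intro k
    rw [← Finset.sum_neg_distrib, Real.exp_sum]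
    apply Finset.prod_le_prod (hfac k)
    intro p hp
    have := Real.add_one_le_exp (-(1/(p:ℝ)))
    linarith
  have hexp : Tendsto (fun k : ℕ => Real.exp (-(∑ p ∈ Nat.primesBelow k, (1/(p:ℝ)))))
      atTop (nhds 0) :=
    Real.tendsto_exp_atBot.comp (tendsto_neg_atBot_iff.mpr sum_primesBelow_tendsto)
  exact tendsto_of_tendsto_of_tendsto_of_le_of_le tendsto_const_nhds hexp
    (fun k => Finset.prod_nonneg (hfac k)) hup

lemma totient_ratio (k : ℕ) :
    ((Nat.totient (∏ p ∈ Nat.primesBelow k, p) : ℝ)) / ((∏ p ∈ Nat.primesBelow k, p : ℕ) : ℝ)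
      = ∏ p ∈ Nat.primesBelow k, (1 - 1 / (p:ℝ)) := by
  set q : ℕ := ∏ p ∈ Nat.primesBelow k, p with hq
  have hq0 : 0 < q := Finset.prod_pos fun p hp => (Nat.prime_of_mem_primesBelow hp).pos
  have hpf : q.primeFactors = Nat.primesBelow k :=
    Nat.primeFactors_prod fun p hp => Nat.prime_of_mem_primesBelow hp
  have h := Nat.totient_eq_mul_prod_factors q
  have h' : ((Nat.totient q : ℝ)) = (q:ℝ) * ∏ p ∈ Nat.primesBelow k, (1 - 1/(p:ℝ)) := by
    have := congrArg (fun x : ℚ => (x : ℝ)) h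
    push_cast at this
    rw [hpf] at this
    simpa [one_div] using this
  rw [h']
  field_simp

lemma pi_card_eq (N : ℕ) :
    ((Finset.Icc 1 N).filter (fun k => Nat.Prime k)).card = (N+1).primeCounting' := by
  rw [← Nat.primesBelow_card_eq_primeCounting']
  congr 1
  ext p
  simp only [mem_filter, Finset.mem_Icc, Nat.mem_primesBelow]
  constructor
  · rintro ⟨⟨h1, h2⟩, hp⟩; exact ⟨by omega, hp⟩
  · rintro ⟨h1, hp⟩; exact ⟨⟨hp.one_lt.le, by omega⟩, hp⟩

lemma pi_bound (q N : ℕ) (hq : 0 < q) (hN : q + 1 ≤ N) :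
    (N+1).primeCounting' ≤ (q+2).primeCounting' + q.totient * (N / q + 1) := by
  have h := Nat.primeCounting'_add_le (a := q) (k := q + 2) hq.ne' (by omega) (N - q - 1)
  have he : q + 2 + (N - q - 1) = N + 1 := by omega
  rw [he] at h
  refine h.trans (Nat.add_le_add_left (Nat.mul_le_mul_left _ ?_) _)
  have : (N - q - 1) / q ≤ N / q := Nat.div_le_div_right (by omega)
  omega

lemma prime_density_zero :
    Tendsto (fun N : ℕ => (((Finset.Icc 1 N).filter (fun k => Nat.Prime k)).card : ℝ) / (N:ℝ))
      atTop (nhds 0) := by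
  rw [tendsto_order]
  constructor
  · intro a ha
    filter_upwards with N
    calc a < 0 := ha
    _ ≤ _ := by positivity
  · intro a ha
    obtain ⟨k, hk⟩ := (prod_primesBelow_tendsto.eventually_lt_const (half_pos ha)).exists
    set q : ℕ := ∏ p ∈ Nat.primesBelow k, p with hqdef
    have hq0 : 0 < q := Finset.prod_pos fun p hp => (Nat.prime_of_mem_primesBelow hp).pos
    have hratio : ((Nat.totient q : ℝ)) / (q:ℝ) < a/2 := by
      rw [hqdef, totient_ratio]; exact hk
    set C : ℝ := ((q+2).primeCounting' : ℝ) + (Nat.totient q : ℝ) with hCdef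
    have hC : Tendsto (fun N : ℕ => C / (N:ℝ)) atTop (nhds 0) :=
      tendsto_const_div_atTop_nhds_zero_nat C
    filter_upwards [eventually_ge_atTop (q+1), hC.eventually_lt_const (half_pos ha)]
      with N h1 h2
    have hN0 : (0:ℝ) < N := by
      have : 0 < N := by omega
      exact_mod_cast this
    have hb := pi_bound q N hq0 h1
    have hcast : (((Finset.Icc 1 N).filter (fun k => Nat.Prime k)).card : ℝ)
        ≤ C + (Nat.totient q : ℝ) * ((N:ℝ)/(q:ℝ)) := by
      rw [pi_card_eq]
      have h3 : ((N+1).primeCounting' : ℝ) ≤ ((q+2).primeCounting' : ℝ)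
          + (Nat.totient q : ℝ) * (((N / q : ℕ) : ℝ) + 1) := by exact_mod_cast hb
      have h4 : ((N / q : ℕ) : ℝ) ≤ (N:ℝ)/(q:ℝ) := Nat.cast_div_le
      nlinarith [Nat.cast_nonneg (α := ℝ) (Nat.totient q)]
    calc (((Finset.Icc 1 N).filter (fun k => Nat.Prime k)).card : ℝ) / (N:ℝ)
        ≤ (C + (Nat.totient q : ℝ) * ((N:ℝ)/(q:ℝ))) / (N:ℝ) := by gcongr
      _ = C / (N:ℝ) + (Nat.totient q : ℝ) / (q:ℝ) := by
          rw [add_div, mul_div_assoc, div_div, mul_comm ((q:ℝ)) ((N:ℝ)), ← div_div,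
            div_self hN0.ne', mul_one_div]
      _ < a/2 + a/2 := by gcongr
      _ = a := by ring

lemma atomMbb_one (k : ℕ) : atomMbb 1 k ↔ k.Prime := by
  constructor
  · rintro ⟨hm, h1, hne⟩
    rw [Nat.prime_def_lt']
    refine ⟨h1, fun m hm2 hmlt hdvd => hne ?_⟩
    obtain ⟨t, rfl⟩ := hdvd
    have ht0 : t ≠ 0 := by rintro rfl; rw [mul_zero] at h1; omega
    have ht1 : t ≠ 1 := by rintro rfl; rw [mul_one] at hmlt; exact lt_irrefl _ hmlt
    exact ⟨m, t, Or.inl ⟨by omega, one_dvd _⟩, Or.inl ⟨by omega, one_dvd _⟩, hm2,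
      by omega, rfl⟩
  · intro hp
    refine ⟨Or.inl ⟨hp.one_lt.le, one_dvd _⟩, hp.one_lt, ?_⟩
    rintro ⟨m, m', -, -, hm1, hm'1, rfl⟩
    rcases Nat.prime_mul_iff.mp hp with ⟨-, h⟩ | ⟨-, h⟩ <;> omega

end Aux

theorem atomic_density_Mbb (b : ℕ) (hb : 1 ≤ b) :
    Filter.Tendsto
      (fun n : ℕ =>
        (((Finset.Icc 1 n).filter (fun k => atomMbb b k)).card : ℝ) /
          (((Finset.Icc 1 n).filter (fun k => memMbb b k)).card : ℝ))
      Filter.atTop (nhds (1 - 1 / (b : ℝ))) := by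
  rcases eq_or_lt_of_le hb with h1 | h2
  · -- b = 1
    subst h1
    rw [show (1:ℝ) - 1/((1:ℕ):ℝ) = 0 by norm_num]
    apply prime_density_zero.congr
    intro n
    have hA : ((Finset.Icc 1 n).filter (fun k => atomMbb 1 k))
        = ((Finset.Icc 1 n).filter (fun k => Nat.Prime k)) := by
      ext k
      simp [atomMbb_one]
    have hM : ((Finset.Icc 1 n).filter (fun k => memMbb 1 k)) = Finset.Icc 1 n := by
      apply Finset.filter_true_of_mem
      intro k hk
      exact Or.inl ⟨(Finset.mem_Icc.mp hk).1, one_dvd _⟩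
    rw [hA, hM, Nat.card_Icc]
    norm_num
  · -- 2 ≤ b
    have hb2 : 2 ≤ b := h2
    apply (tendsto_ratio_ge_two b hb2).congr'
    filter_upwards [eventually_ge_atTop 1] with n hn
    rw [card_atom_filter b hb2 n, card_mem_filter b hb2 n hn]
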